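/- arXiv:0707.2125 — 2 statements merged into one kernel-verified Lean document; each statement's English description precedes it below -/
import Mathlib

section
/- Let r ≥ 1 and let f be a smooth diffeomorphism of Δʳ onto itself with f*ω₀ = ω₀ and f*ω₋ = ω₋. Then there exist a permutation σ of {1, …, r} and complex numbers c_1, …, c_r with |c_j| = 1 such that the Fréchet derivative of f at 0 is the ℂ-linear map (Df(0)v)_j = c_j·v_{σ(j)}; in particular Df(0) is a linear automorphism of the polydisc Δʳ. -/
open Complex Set

noncomputable section

/-- The open unit polydisc in `ℂʳ`. -/
def polydisc (r : ℕ) : Set (Fin r → ℂ) := {z | ∀ j, ‖z j‖ < 1}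

/-- The flat symplectic form `ω₀(u,v) = Σⱼ Im (conj uⱼ * vⱼ)` on `ℂʳ`. -/
def omega0 {r : ℕ} (u v : Fin r → ℂ) : ℝ := ∑ j, ((starRingEnd ℂ) (u j) * v j).im

/-- The hyperbolic symplectic form
`ω₋(z)(u,v) = Σⱼ Im (conj uⱼ * vⱼ) / (1 - |zⱼ|²)²` on the polydisc. -/
def omegaMinus {r : ℕ} (z u v : Fin r → ℂ) : ℝ :=
  ∑ j, ((starRingEnd ℂ) (u j) * v j).im / (1 - ‖z j‖ ^ 2) ^ 2

namespace PolyAux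

open Finset Filter Topology

variable {r : ℕ}

lemma isOpen_polydisc (r : ℕ) : IsOpen (polydisc r) := by
  have h : polydisc r = ⋂ j, (fun z : Fin r → ℂ => ‖z j‖) ⁻¹' Set.Iio 1 := by
    ext z; simp [polydisc]
  rw [h]
  exact isOpen_iInter_of_finite fun j =>
    (continuous_norm.comp (continuous_apply j)).isOpen_preimage _ isOpen_Iio

lemma zero_mem_polydisc : (0 : Fin r → ℂ) ∈ polydisc r := fun j => by simp

def sm (a : Fin r → ℝ) (v : Fin r → ℂ) : Fin r → ℂ := fun l => (a l : ℂ) * v l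

def lam (z : Fin r → ℂ) : Fin r → ℝ := fun l => ((1 - ‖z l‖ ^ 2) ^ 2)⁻¹

lemma omega0_zero_left (v : Fin r → ℂ) : omega0 0 v = 0 := by simp [omega0]

lemma omega0_sub_right (u v w : Fin r → ℂ) :
    omega0 u (v - w) = omega0 u v - omega0 u w := by
  simp [omega0, mul_sub, Finset.sum_sub_distrib]

lemma im_I_mul_conj (z : ℂ) : ((starRingEnd ℂ) (Complex.I * z) * z).im = - Complex.normSq z := by
  simp [Complex.normSq_apply, Complex.mul_im, Complex.mul_re]
  ring

lemma im_conj_mul_I (z : ℂ) : ((starRingEnd ℂ) z * (Complex.I * z)).im = Complex.normSq z := by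
  simp [Complex.normSq_apply, Complex.mul_im, Complex.mul_re]

lemma omega0_right_nondeg {w : Fin r → ℂ} (h : ∀ x, omega0 x w = 0) : w = 0 := by
  have h1 := h (fun l => Complex.I * w l)
  rw [omega0] at h1
  simp only [im_I_mul_conj] at h1
  rw [Finset.sum_neg_distrib] at h1
  have h2 : ∑ l, Complex.normSq (w l) = 0 := by linarith
  funext l
  have := (Finset.sum_eq_zero_iff_of_nonneg (fun i _ => Complex.normSq_nonneg (w i))).mp h2 l (Finset.mem_univ l)
  exact Complex.normSq_eq_zero.mp this

lemma omega0_left_nondeg {u : Fin r → ℂ} (h : ∀ v, omega0 u v = 0) : u = 0 := by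
  have h1 := h (fun l => Complex.I * u l)
  rw [omega0] at h1
  simp only [im_conj_mul_I] at h1
  funext l
  have := (Finset.sum_eq_zero_iff_of_nonneg (fun i _ => Complex.normSq_nonneg (u i))).mp h1 l (Finset.mem_univ l)
  exact Complex.normSq_eq_zero.mp this

lemma inj_of_omega0 {A : (Fin r → ℂ) →L[ℝ] (Fin r → ℂ)}
    (h : ∀ u v, omega0 (A u) (A v) = omega0 u v) : Function.Injective A := by
  have ker : ∀ u, A u = 0 → u = 0 := by
    intro u hu
    apply omega0_left_nondeg
    intro v
    rw [← h u v, hu, omega0_zero_left]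
  intro u u' huu
  have h2 : A (u - u') = 0 := by rw [map_sub, huu, sub_self]
  exact sub_eq_zero.mp (ker _ h2)

lemma surj_of_omega0 {A : (Fin r → ℂ) →L[ℝ] (Fin r → ℂ)}
    (h : ∀ u v, omega0 (A u) (A v) = omega0 u v) : Function.Surjective A := by
  have := (LinearMap.injective_iff_surjective (f := (A : (Fin r → ℂ) →ₗ[ℝ] (Fin r → ℂ)))).mp
    (inj_of_omega0 h)
  exact this

lemma omegaMinus_eq (z u v : Fin r → ℂ) : omegaMinus z u v = omega0 u (sm (lam z) v) := by
  unfold omegaMinus omega0 sm lam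
  refine Finset.sum_congr rfl fun l _ => ?_
  rw [mul_left_comm, Complex.ofReal_mul', div_eq_mul_inv, mul_comm]

lemma key (f : (Fin r → ℂ) → Fin r → ℂ)
    (h0 : ∀ z ∈ polydisc r, ∀ u v : Fin r → ℂ,
      omega0 (fderiv ℝ f z u) (fderiv ℝ f z v) = omega0 u v)
    (hm : ∀ z ∈ polydisc r, ∀ u v : Fin r → ℂ,
      omegaMinus (f z) (fderiv ℝ f z u) (fderiv ℝ f z v) = omegaMinus z u v)
    {z : Fin r → ℂ} (hz : z ∈ polydisc r) (v : Fin r → ℂ) :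
    sm (lam (f z)) (fderiv ℝ f z v) = fderiv ℝ f z (sm (lam z) v) := by
  set A := fderiv ℝ f z with hA
  have hsurj := surj_of_omega0 (h0 z hz)
  have hdiff : ∀ x, omega0 x (sm (lam (f z)) (A v) - A (sm (lam z) v)) = 0 := by
    intro x
    obtain ⟨u, rfl⟩ := hsurj x
    rw [omega0_sub_right]
    have h1 : omega0 (A u) (sm (lam (f z)) (A v)) = omega0 u (sm (lam z) v) := by
      have h2 := hm z hz u v
      rwa [omegaMinus_eq, omegaMinus_eq] at h2
    rw [h1, h0 z hz u (sm (lam z) v), sub_self]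
  exact sub_eq_zero.mp (omega0_right_nondeg hdiff)

lemma lam_aux {a b : ℝ} (ha0 : 0 ≤ a) (ha1 : a < 1) (hb0 : 0 ≤ b) (hb1 : b < 1)
    (h : ((1 - a ^ 2) ^ 2)⁻¹ = ((1 - b ^ 2) ^ 2)⁻¹) : a = b := by
  have h2 : (1 - a ^ 2) ^ 2 = (1 - b ^ 2) ^ 2 := inv_inj.mp h
  have ha : 0 < 1 - a ^ 2 := by nlinarith
  have hb : 0 < 1 - b ^ 2 := by nlinarith
  have h4 : (1 - a ^ 2 - (1 - b ^ 2)) * ((1 - a ^ 2) + (1 - b ^ 2)) = 0 := by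
    linear_combination h2
  have h5 : 1 - a ^ 2 - (1 - b ^ 2) = 0 := by
    rcases mul_eq_zero.mp h4 with h' | h'
    · exact h'
    · nlinarith
  have h6 : (a - b) * (a + b) = 0 := by linear_combination -h5
  rcases mul_eq_zero.mp h6 with h' | h'
  · linarith
  · have : a = 0 := by linarith
    have : b = 0 := by linarith
    linarith

lemma single_mem_polydisc {k : Fin r} {w : ℂ} (hw : ‖w‖ < 1) :
    Pi.single k w ∈ polydisc r := by
  intro l
  by_cases h : l = k
  · subst h; rw [Pi.single_eq_same]; exact hw
  · rw [Pi.single_eq_of_ne h]; simp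

lemma axis_cases (f : (Fin r → ℂ) → Fin r → ℂ)
    (h0 : ∀ z ∈ polydisc r, ∀ u v : Fin r → ℂ,
      omega0 (fderiv ℝ f z u) (fderiv ℝ f z v) = omega0 u v)
    (hm : ∀ z ∈ polydisc r, ∀ u v : Fin r → ℂ,
      omegaMinus (f z) (fderiv ℝ f z u) (fderiv ℝ f z v) = omegaMinus z u v)
    (hmaps : Set.MapsTo f (polydisc r) (polydisc r))
    (k : Fin r) {w : ℂ} (hw : ‖w‖ < 1) (j : Fin r) :
    f (Pi.single k w) j = 0 ∨ ‖f (Pi.single k w) j‖ = ‖w‖ := by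
  by_contra hcon
  push_neg at hcon
  obtain ⟨hj0, hjw⟩ := hcon
  set z : Fin r → ℂ := Pi.single k w with hzdef
  have hz : z ∈ polydisc r := single_mem_polydisc hw
  have hfz := hmaps hz
  set A := fderiv ℝ f z with hA
  have hsurj := surj_of_omega0 (h0 z hz)
  have hkey := key f h0 hm hz
  have ha0 : 0 < ‖f z j‖ := norm_pos_iff.mpr hj0
  have ha1 : ‖f z j‖ < 1 := hfz j
  have hb0 : 0 ≤ ‖w‖ := norm_nonneg _
  have hlamfz : lam (f z) j = ((1 - ‖f z j‖ ^ 2) ^ 2)⁻¹ := rfl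
  have hlamzk : lam z k = ((1 - ‖w‖ ^ 2) ^ 2)⁻¹ := by
    simp [lam, hzdef, Pi.single_eq_same]
  have hmu1 : lam (f z) j ≠ 1 := by
    intro h
    have h2 : ‖f z j‖ = 0 := by
      apply lam_aux ha0.le ha1 le_rfl one_pos
      rw [← hlamfz, h]; norm_num
    linarith
  have hmuw : lam (f z) j ≠ lam z k := by
    intro h
    exact hjw (lam_aux ha0.le ha1 hb0 hw (by rw [← hlamfz, ← hlamzk, h]))
  have hrow : ∀ v, A v j = 0 := by
    intro v
    have hv : Function.update v k 0 + Pi.single k (v k) = v := by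
      funext l
      by_cases h : l = k
      · subst h; simp
      · simp [Function.update_of_ne h, Pi.single_eq_of_ne h]
    have h1 : A (Function.update v k 0) j = 0 := by
      have hsm : sm (lam z) (Function.update v k 0) = Function.update v k 0 := by
        funext l
        by_cases h : l = k
        · subst h; simp [sm]
        · have hl : lam z l = 1 := by
            simp [lam, hzdef, Pi.single_eq_of_ne h]
          simp [sm, hl]
      have hx := congrFun (hkey (Function.update v k 0)) j
      rw [hsm] at hx
      by_contra hne
      apply hmu1
      have hx' : ((lam (f z) j : ℝ) : ℂ) * A (Function.update v k 0) j
          = 1 * A (Function.update v k 0) j := by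
        rw [one_mul]; exact hx
      have := mul_right_cancel₀ hne hx'
      exact_mod_cast this
    have h2 : A (Pi.single k (v k)) j = 0 := by
      have hsm : sm (lam z) (Pi.single k (v k)) = (lam z k) • (Pi.single k (v k) : Fin r → ℂ) := by
        funext l
        by_cases h : l = k
        · subst h; simp [sm, Pi.smul_apply, Complex.real_smul]
        · simp [sm, Pi.single_eq_of_ne h]
      have hx := congrFun (hkey (Pi.single k (v k))) j
      rw [hsm, map_smul] at hx
      by_contra hne
      apply hmuw
      have hx' : ((lam (f z) j : ℝ) : ℂ) * A (Pi.single k (v k)) j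
          = ((lam z k : ℝ) : ℂ) * A (Pi.single k (v k)) j :=
        calc ((lam (f z) j : ℝ) : ℂ) * A (Pi.single k (v k)) j
            = sm (lam (f z)) (A (Pi.single k (v k))) j := rfl
          _ = (lam z k • A (Pi.single k (v k))) j := hx
          _ = ((lam z k : ℝ) : ℂ) * A (Pi.single k (v k)) j := by
              simp [Pi.smul_apply, Complex.real_smul]
      have := mul_right_cancel₀ hne hx'
      exact_mod_cast this
    have h3 : A v = A (Function.update v k 0) + A (Pi.single k (v k)) := by
      rw [← map_add, hv]
    rw [h3, Pi.add_apply, h1, h2, add_zero]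
  obtain ⟨u, hu⟩ := hsurj (Pi.single j 1)
  have h4 := hrow u
  rw [hu, Pi.single_eq_same] at h4
  exact one_ne_zero h4

lemma four_dep (a b c d : ℂ) :
    ∃ g : Fin 4 → ℝ, g 0 • a + g 1 • b + g 2 • c + g 3 • d = 0 ∧ ∃ i, g i ≠ 0 := by
  have hni : ¬ LinearIndependent ℝ ![a, b, c, d] := by
    intro h
    have h2 := h.fintype_card_le_finrank
    rw [Complex.finrank_real_complex] at h2
    simp at h2
  obtain ⟨g, hg, hi⟩ := Fintype.not_linearIndependent_iff.mp hni
  refine ⟨g, ?_, hi⟩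
  rw [Fin.sum_univ_four] at hg
  simpa using hg

lemma axis_unique (f : (Fin r → ℂ) → Fin r → ℂ)
    (h0 : ∀ z ∈ polydisc r, ∀ u v : Fin r → ℂ,
      omega0 (fderiv ℝ f z u) (fderiv ℝ f z v) = omega0 u v)
    (hm : ∀ z ∈ polydisc r, ∀ u v : Fin r → ℂ,
      omegaMinus (f z) (fderiv ℝ f z u) (fderiv ℝ f z v) = omegaMinus z u v)
    (hmaps : Set.MapsTo f (polydisc r) (polydisc r))
    (k : Fin r) {w : ℂ} (hw0 : w ≠ 0) (hw : ‖w‖ < 1)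
    {j₁ j₂ : Fin r} (hne : j₁ ≠ j₂)
    (h1 : f (Pi.single k w) j₁ ≠ 0) (h2 : f (Pi.single k w) j₂ ≠ 0) : False := by
  set z : Fin r → ℂ := Pi.single k w with hzdef
  have hz : z ∈ polydisc r := single_mem_polydisc hw
  set A := fderiv ℝ f z with hA
  have hinj := inj_of_omega0 (h0 z hz)
  have hsurj := surj_of_omega0 (h0 z hz)
  have hkey := key f h0 hm hz
  have hb0 : 0 < ‖w‖ := norm_pos_iff.mpr hw0
  have hlamzk : lam z k = ((1 - ‖w‖ ^ 2) ^ 2)⁻¹ := by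
    simp [lam, hzdef, Pi.single_eq_same]
  have hL1 : lam z k ≠ 1 := by
    intro h
    have h2' : ‖w‖ = 0 := by
      apply lam_aux hb0.le hw le_rfl one_pos
      rw [← hlamzk, h]; norm_num
    linarith
  have habs1 : ‖f z j₁‖ = ‖w‖ :=
    (axis_cases f h0 hm hmaps k hw j₁).resolve_left h1
  have habs2 : ‖f z j₂‖ = ‖w‖ :=
    (axis_cases f h0 hm hmaps k hw j₂).resolve_left h2
  have hmu : ∀ x : Fin r → ℂ, (∀ l, l ≠ j₁ → l ≠ j₂ → x l = 0) →
      sm (lam (f z)) x = (lam z k) • x := by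
    intro x hx
    funext l
    by_cases e1 : l = j₁
    · subst e1
      have : lam (f z) l = lam z k := by
        rw [hlamzk]; exact congrArg (fun t : ℝ => ((1 - t ^ 2) ^ 2)⁻¹) habs1
      show ((lam (f z) l : ℝ) : ℂ) * x l = _
      rw [this]
      simp [Pi.smul_apply, Complex.real_smul]
    by_cases e2 : l = j₂
    · subst e2
      have : lam (f z) l = lam z k := by
        rw [hlamzk]; exact congrArg (fun t : ℝ => ((1 - t ^ 2) ^ 2)⁻¹) habs2
      show ((lam (f z) l : ℝ) : ℂ) * x l = _
      rw [this]
      simp [Pi.smul_apply, Complex.real_smul]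
    · show ((lam (f z) l : ℝ) : ℂ) * x l = (lam z k • x) l
      simp [Pi.smul_apply, hx l e1 e2]
  have main : ∀ x : Fin r → ℂ, (∀ l, l ≠ j₁ → l ≠ j₂ → x l = 0) →
      ∀ u, A u = x → ∀ l, l ≠ k → u l = 0 := by
    intro x hx u hu l hl
    have hk1 : A (sm (lam z) u) = sm (lam (f z)) (A u) := (hkey u).symm
    rw [hu, hmu x hx, ← hu] at hk1
    have hk2 : A (sm (lam z) u) = A ((lam z k) • u) := by
      rw [hk1, map_smul]
    have hequ : sm (lam z) u = (lam z k) • u := hinj hk2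
    have hequl := congrFun hequ l
    have hll : lam z l = 1 := by
      simp [lam, hzdef, Pi.single_eq_of_ne hl]
    by_contra hul
    apply hL1
    have hx' : ((lam z k : ℝ) : ℂ) * u l = 1 * u l := by
      rw [one_mul]
      calc ((lam z k : ℝ) : ℂ) * u l = (lam z k • u) l := by
            simp [Pi.smul_apply, Complex.real_smul]
        _ = sm (lam z) u l := hequl.symm
        _ = ((lam z l : ℝ) : ℂ) * u l := rfl
        _ = u l := by rw [hll]; simp
    have := mul_right_cancel₀ hul hx'
    exact_mod_cast this
  have hsupp : ∀ (j : Fin r) (cv : ℂ), (j = j₁ ∨ j = j₂) →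
      ∀ l, l ≠ j₁ → l ≠ j₂ → (Pi.single j cv : Fin r → ℂ) l = 0 := by
    intro j cv hj l hl1 hl2
    have hlj : l ≠ j := by rcases hj with h | h <;> (subst h; assumption)
    exact Pi.single_eq_of_ne (M := fun _ => ℂ) hlj cv
  obtain ⟨u₁, hu₁⟩ := hsurj (Pi.single j₁ 1)
  obtain ⟨u₂, hu₂⟩ := hsurj (Pi.single j₁ Complex.I)
  obtain ⟨u₃, hu₃⟩ := hsurj (Pi.single j₂ 1)
  obtain ⟨u₄, hu₄⟩ := hsurj (Pi.single j₂ Complex.I)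
  have hz1 := main _ (hsupp j₁ 1 (Or.inl rfl)) u₁ hu₁
  have hz2 := main _ (hsupp j₁ Complex.I (Or.inl rfl)) u₂ hu₂
  have hz3 := main _ (hsupp j₂ 1 (Or.inr rfl)) u₃ hu₃
  have hz4 := main _ (hsupp j₂ Complex.I (Or.inr rfl)) u₄ hu₄
  obtain ⟨g, hg, i, hgi⟩ := four_dep (u₁ k) (u₂ k) (u₃ k) (u₄ k)
  set v : Fin r → ℂ := g 0 • u₁ + g 1 • u₂ + g 2 • u₃ + g 3 • u₄ with hv
  have hvz : v = 0 := by
    funext l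
    by_cases h : l = k
    · subst h
      simpa [hv, Pi.add_apply, Pi.smul_apply] using hg
    · simp [hv, Pi.add_apply, Pi.smul_apply, hz1 l h, hz2 l h, hz3 l h, hz4 l h]
  have hAv : (0 : Fin r → ℂ) = g 0 • (Pi.single j₁ (1 : ℂ) : Fin r → ℂ)
      + g 1 • (Pi.single j₁ Complex.I : Fin r → ℂ)
      + g 2 • (Pi.single j₂ (1 : ℂ) : Fin r → ℂ)
      + g 3 • (Pi.single j₂ Complex.I : Fin r → ℂ) := by
    calc (0 : Fin r → ℂ) = A v := by rw [hvz, map_zero]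
      _ = _ := by
        rw [hv]
        simp only [map_add, map_smul, hA, hu₁, hu₂, hu₃, hu₄]
  have e1 := congrFun hAv j₁
  have e2 := congrFun hAv j₂
  rw [Pi.add_apply, Pi.add_apply, Pi.add_apply] at e1 e2
  simp only [Pi.smul_apply, Pi.single_eq_same, Pi.single_eq_of_ne hne,
    Pi.single_eq_of_ne (Ne.symm hne), Pi.zero_apply, smul_zero, add_zero, zero_add] at e1 e2
  have e1' : (g 0 : ℂ) + (g 1 : ℂ) * Complex.I = 0 := by
    simpa [Complex.real_smul] using e1.symm
  have e2' : (g 2 : ℂ) + (g 3 : ℂ) * Complex.I = 0 := by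
    simpa [Complex.real_smul] using e2.symm
  have hg0 : g 0 = 0 := by simpa using congrArg Complex.re e1'
  have hg1 : g 1 = 0 := by simpa using congrArg Complex.im e1'
  have hg2 : g 2 = 0 := by simpa using congrArg Complex.re e2'
  have hg3 : g 3 = 0 := by simpa using congrArg Complex.im e2'
  fin_cases i
  · exact hgi hg0
  · exact hgi hg1
  · exact hgi hg2
  · exact hgi hg3

lemma axis_image (f : (Fin r → ℂ) → Fin r → ℂ)
    (hf : ContDiffOn ℝ (⊤ : ℕ∞) f (polydisc r))
    (h0 : ∀ z ∈ polydisc r, ∀ u v : Fin r → ℂ,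
      omega0 (fderiv ℝ f z u) (fderiv ℝ f z v) = omega0 u v)
    (hm : ∀ z ∈ polydisc r, ∀ u v : Fin r → ℂ,
      omegaMinus (f z) (fderiv ℝ f z u) (fderiv ℝ f z v) = omegaMinus z u v)
    (hmaps : Set.MapsTo f (polydisc r) (polydisc r))
    (hr : 1 ≤ r) (k : Fin r) {ζ : ℂ} (hζ : ‖ζ‖ = 1) :
    ∃ j c, ‖c‖ = 1 ∧ fderiv ℝ f 0 (Pi.single k ζ) = Pi.single j c := by
  have hmem0 : (0 : Fin r → ℂ) ∈ polydisc r := zero_mem_polydisc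
  have hf00 : f 0 = 0 := by
    funext j
    have h := axis_cases f h0 hm hmaps ⟨0, hr⟩ (w := 0) (by simp) j
    rw [Pi.single_zero] at h
    rcases h with h | h
    · exact h
    · simpa using h
  have hdiffat : DifferentiableAt ℝ f 0 :=
    (hf.differentiableOn (by simp)).differentiableAt ((isOpen_polydisc r).mem_nhds hmem0)
  have hder : HasFDerivAt f (fderiv ℝ f 0) 0 := hdiffat.hasFDerivAt
  set A := fderiv ℝ f 0 with hA
  set v : Fin r → ℂ := Pi.single k ζ with hvdef
  have hζ0 : ζ ≠ 0 := by
    intro h; rw [h] at hζ; simp at hζ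
  have hv0 : v ≠ 0 := by
    intro h
    have := congrFun h k
    rw [hvdef, Pi.single_eq_same] at this
    exact hζ0 this
  have hinj : Function.Injective A := inj_of_omega0 (h0 0 hmem0)
  have hAv0 : A v ≠ 0 := by
    intro h
    exact hv0 (hinj (by rw [h, map_zero]))
  set c : ℕ → ℝ := fun n => (n : ℝ) + 2 with hcdef
  have hcpos : ∀ n, 0 < c n := fun n => by positivity
  have hcbig : ∀ n, 1 < c n := fun n => by
    have : (0 : ℝ) ≤ (n : ℝ) := Nat.cast_nonneg n
    simp only [hcdef]; linarith
  have hcn : Tendsto (fun n => ‖c n‖) atTop atTop := by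
    have hb : Tendsto c atTop atTop :=
      tendsto_atTop_add_const_right _ 2 tendsto_natCast_atTop_atTop
    exact tendsto_atTop_mono
      (fun n => by rw [Real.norm_eq_abs]; exact le_abs_self (c n)) hb
  have hlim0 := hder.lim v hcn
  simp only [zero_add, hf00, sub_zero] at hlim0
  have hwn : ∀ n, (c n)⁻¹ • v = Pi.single k ((c n)⁻¹ • ζ) := fun n =>
    (Pi.single_smul' k ((c n)⁻¹) ζ).symm
  have habsw : ∀ n, ‖(c n)⁻¹ • ζ‖ = (c n)⁻¹ := by
    intro n
    rw [Complex.real_smul, norm_mul, Complex.norm_real, Real.norm_eq_abs, hζ, mul_one,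
      abs_of_pos (inv_pos.mpr (hcpos n))]
  have habswlt : ∀ n, ‖(c n)⁻¹ • ζ‖ < 1 := by
    intro n
    rw [habsw n]
    exact inv_lt_one_of_one_lt₀ (hcbig n)
  have habswne : ∀ n, ((c n)⁻¹ • ζ : ℂ) ≠ 0 := by
    intro n h
    have := habsw n
    rw [h] at this
    simp only [norm_zero] at this
    exact absurd this.symm (ne_of_gt (inv_pos.mpr (hcpos n)))
  have hcompl : ∀ l, Tendsto (fun n => c n • f ((c n)⁻¹ • v) l) atTop (𝓝 (A v l)) := by
    intro l
    have h := ((continuous_apply l).tendsto (A v)).comp hlim0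
    simpa [Function.comp_def] using h
  obtain ⟨l, hl⟩ : ∃ l, A v l ≠ 0 := by
    by_contra h
    push_neg at h
    exact hAv0 (funext h)
  have hev : ∀ (l' : Fin r), A v l' ≠ 0 → ∀ᶠ n in atTop, f ((c n)⁻¹ • v) l' ≠ 0 := by
    intro l' hl'
    refine ((hcompl l').eventually_ne hl').mono fun n hn => ?_
    intro h
    rw [h, smul_zero] at hn
    exact hn rfl
  have huniq : ∀ l', l' ≠ l → A v l' = 0 := by
    intro l' hll'
    by_contra hl'
    obtain ⟨n, hn1, hn2⟩ := ((hev l hl).and (hev l' hl')).exists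
    rw [hwn n] at hn1 hn2
    exact axis_unique f h0 hm hmaps k (habswne n) (habswlt n)
      (Ne.symm hll') hn1 hn2
  have habs1 : ‖A v l‖ = 1 := by
    have h1 : Tendsto (fun n => ‖c n • f ((c n)⁻¹ • v) l‖) atTop
        (𝓝 (‖A v l‖)) :=
      (continuous_norm.tendsto _).comp (hcompl l)
    have h2 : ∀ᶠ n in atTop, ‖c n • f ((c n)⁻¹ • v) l‖ = 1 := by
      refine (hev l hl).mono fun n hn => ?_
      have hcs : ‖f ((c n)⁻¹ • v) l‖ = ‖(c n)⁻¹ • ζ‖ := by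
        have h3 := axis_cases f h0 hm hmaps k (habswlt n) l
        rw [← hwn n] at h3
        exact h3.resolve_left hn
      rw [Complex.real_smul, norm_mul, Complex.norm_real, Real.norm_eq_abs, hcs, habsw n,
        abs_of_pos (hcpos n), mul_inv_cancel₀ (hcpos n).ne']
    have h3 : Tendsto (fun n => ‖c n • f ((c n)⁻¹ • v) l‖) atTop (𝓝 1) :=
      Tendsto.congr' (EventuallyEq.symm h2) tendsto_const_nhds
    exact tendsto_nhds_unique h1 h3
  refine ⟨l, A v l, habs1, funext fun m => ?_⟩
  by_cases h : m = l
  · subst h; rw [Pi.single_eq_same]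
  · rw [Pi.single_eq_of_ne h, huniq m h]

end PolyAux

/-- `f` is a smooth diffeomorphism of `s` onto `t`: it is `C^∞` on `s`, maps `s` to `t`,
and has a `C^∞` inverse mapping `t` to `s`. -/
def IsSmoothDiffeoOn {E F : Type*} [NormedAddCommGroup E] [NormedSpace ℝ E]
    [NormedAddCommGroup F] [NormedSpace ℝ F] (f : E → F) (s : Set E) (t : Set F) : Prop :=
  ContDiffOn ℝ (⊤ : ℕ∞) f s ∧ Set.MapsTo f s t ∧
    ∃ g : F → E, ContDiffOn ℝ (⊤ : ℕ∞) g t ∧ Set.MapsTo g t s ∧ Set.InvOn g f s t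

open PolyAux in
/-- The derivative at the origin of a bisymplectomorphism of the polydisc is a
permutation of coordinates composed with unimodular coordinatewise multiplications;
in particular it is a `ℂ`-linear automorphism of the polydisc. -/
theorem deriv_at_zero_of_polydisc_bisymplectomorphism (r : ℕ) (hr : 1 ≤ r)
    (f : (Fin r → ℂ) → Fin r → ℂ)
    (hf : IsSmoothDiffeoOn f (polydisc r) (polydisc r))
    (h0 : ∀ z ∈ polydisc r, ∀ u v : Fin r → ℂ,
      omega0 (fderiv ℝ f z u) (fderiv ℝ f z v) = omega0 u v)
    (hm : ∀ z ∈ polydisc r, ∀ u v : Fin r → ℂ,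
      omegaMinus (f z) (fderiv ℝ f z u) (fderiv ℝ f z v) = omegaMinus z u v) :
    ∃ (σ : Equiv.Perm (Fin r)) (c : Fin r → ℂ),
      (∀ j, ‖c j‖ = 1) ∧
      ∀ (v : Fin r → ℂ) (j : Fin r), fderiv ℝ f 0 v j = c j * v (σ j) := by
  classical
  obtain ⟨hsm, hmaps, -⟩ := hf
  have hmem0 : (0 : Fin r → ℂ) ∈ polydisc r := zero_mem_polydisc
  set A := fderiv ℝ f 0 with hA
  have hinj : Function.Injective A := inj_of_omega0 (h0 0 hmem0)
  have h1 : ∀ k : Fin r, ∃ j c, ‖c‖ = 1 ∧ A (Pi.single k 1) = Pi.single j c :=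
    fun k => axis_image f hsm h0 hm hmaps hr k (by simp)
  have h2 : ∀ k : Fin r, ∃ j c, ‖c‖ = 1 ∧ A (Pi.single k Complex.I) = Pi.single j c :=
    fun k => axis_image f hsm h0 hm hmaps hr k Complex.norm_I
  choose p cc hcc hp using h1
  choose q d hd hq using h2
  -- q = p and d = cc * I
  have hrhs : ∀ k : Fin r, omega0 (Pi.single k (1 : ℂ)) (Pi.single k Complex.I) = 1 := by
    intro k
    rw [omega0, Finset.sum_eq_single k]
    · rw [Pi.single_eq_same, Pi.single_eq_same]; simp
    · intro b _ hb
      rw [Pi.single_eq_of_ne hb]; simp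
    · simp
  have hqp : ∀ k, q k = p k := by
    intro k
    by_contra hne
    have h00 := h0 0 hmem0 (Pi.single k 1) (Pi.single k Complex.I)
    rw [hp k, hq k, hrhs k] at h00
    have hzero : omega0 (Pi.single (p k) (cc k)) (Pi.single (q k) (d k)) = 0 := by
      rw [omega0]
      apply Finset.sum_eq_zero
      intro b _
      by_cases hb : b = p k
      · subst hb
        rw [Pi.single_eq_of_ne (show p k ≠ q k from fun h => hne h.symm)]
        simp
      · rw [Pi.single_eq_of_ne hb]; simp
    rw [hzero] at h00
    norm_num at h00
  have hdc : ∀ k, d k = cc k * Complex.I := by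
    intro k
    have h00 := h0 0 hmem0 (Pi.single k 1) (Pi.single k Complex.I)
    rw [hp k, hq k, hrhs k, hqp k] at h00
    have hval : ((starRingEnd ℂ) (cc k) * d k).im = 1 := by
      rw [omega0, Finset.sum_eq_single (p k)] at h00
      · rw [Pi.single_eq_same, Pi.single_eq_same] at h00; exact h00
      · intro b _ hb
        rw [Pi.single_eq_of_ne hb]; simp
      · simp
    have habsprod : ‖(starRingEnd ℂ) (cc k) * d k‖ = 1 := by
      rw [norm_mul, Complex.norm_conj, hcc, hd, one_mul]
    have hre : ((starRingEnd ℂ) (cc k) * d k).re = 0 := by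
      have hs := Complex.sq_norm ((starRingEnd ℂ) (cc k) * d k)
      rw [habsprod, Complex.normSq_apply, hval] at hs
      nlinarith
    have hcd : (starRingEnd ℂ) (cc k) * d k = Complex.I := by
      apply Complex.ext
      · rw [hre, Complex.I_re]
      · rw [hval, Complex.I_im]
    have hns : Complex.normSq (cc k) = 1 := by
      rw [← Complex.sq_norm, hcc]; norm_num
    have h3 : cc k * ((starRingEnd ℂ) (cc k) * d k) = cc k * Complex.I := by rw [hcd]
    rwa [← mul_assoc, Complex.mul_conj, hns, Complex.ofReal_one, one_mul] at h3
  -- injectivity of p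
  have hccne : ∀ k, cc k ≠ 0 := by
    intro k h
    have := hcc k
    rw [h] at this
    simp at this
  have hpinj : Function.Injective p := by
    intro k k' hkk
    by_contra hne
    obtain ⟨g, hg, i, hgi⟩ := four_dep (cc k) (cc k * Complex.I) (cc k') (cc k' * Complex.I)
    set v : Fin r → ℂ := g 0 • (Pi.single k (1 : ℂ) : Fin r → ℂ)
        + g 1 • (Pi.single k Complex.I : Fin r → ℂ)
        + g 2 • (Pi.single k' (1 : ℂ) : Fin r → ℂ)
        + g 3 • (Pi.single k' Complex.I : Fin r → ℂ) with hv
    have hAk2 : A (Pi.single k Complex.I) = Pi.single (p k) (cc k * Complex.I) := by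
      rw [hq k, hqp k, hdc k]
    have hAk2' : A (Pi.single k' Complex.I) = Pi.single (p k') (cc k' * Complex.I) := by
      rw [hq k', hqp k', hdc k']
    have hAv : A v = Pi.single (p k)
        (g 0 • cc k + g 1 • (cc k * Complex.I) + g 2 • cc k' + g 3 • (cc k' * Complex.I)) := by
      rw [hv]
      simp only [map_add, map_smul, hp k, hp k', hAk2, hAk2', hkk]
      funext m
      by_cases h : m = p k'
      · subst h
        simp [Pi.single_eq_same]
      · simp [Pi.single_eq_of_ne h]
    rw [hg, Pi.single_zero] at hAv
    have hv0 : v = 0 := hinj (by rw [hAv, map_zero])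
    have e1 := congrFun hv0 k
    have e2 := congrFun hv0 k'
    have hkk' : k ≠ k' := hne
    simp only [hv, Pi.add_apply, Pi.smul_apply, Pi.single_eq_same,
      Pi.single_eq_of_ne hkk', Pi.single_eq_of_ne (Ne.symm hkk'),
      Pi.zero_apply, smul_zero, add_zero, zero_add] at e1 e2
    have e1' : (g 0 : ℂ) + (g 1 : ℂ) * Complex.I = 0 := by
      simpa [Complex.real_smul] using e1
    have e2' : (g 2 : ℂ) + (g 3 : ℂ) * Complex.I = 0 := by
      simpa [Complex.real_smul] using e2
    have hg0 : g 0 = 0 := by simpa using congrArg Complex.re e1'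
    have hg1 : g 1 = 0 := by simpa using congrArg Complex.im e1'
    have hg2 : g 2 = 0 := by simpa using congrArg Complex.re e2'
    have hg3 : g 3 = 0 := by simpa using congrArg Complex.im e2'
    fin_cases i
    · exact hgi hg0
    · exact hgi hg1
    · exact hgi hg2
    · exact hgi hg3
  have hpbij : Function.Bijective p := (Finite.injective_iff_bijective).mp hpinj
  set σe := Equiv.ofBijective p hpbij with hσe
  refine ⟨σe.symm, fun j => cc (σe.symm j), fun j => hcc _, ?_⟩
  intro v j
  have hdecomp : v = ∑ k, ((v k).re • (Pi.single k (1 : ℂ) : Fin r → ℂ)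
      + (v k).im • (Pi.single k Complex.I : Fin r → ℂ)) := by
    funext l
    rw [Finset.sum_apply, Finset.sum_eq_single l]
    · simp only [Pi.add_apply, Pi.smul_apply, Pi.single_eq_same, Complex.real_smul,
        mul_one]
      exact (Complex.re_add_im (v l)).symm
    · intro b _ hb
      simp [Pi.single_eq_of_ne (Ne.symm hb)]
    · simp
  have hexp : A v = ∑ k, ((v k).re • (Pi.single (p k) (cc k) : Fin r → ℂ)
      + (v k).im • (Pi.single (p k) (cc k * Complex.I) : Fin r → ℂ)) := by
    conv_lhs => rw [hdecomp]
    rw [map_sum]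
    refine Finset.sum_congr rfl fun k _ => ?_
    rw [map_add, map_smul, map_smul, hp k, hq k, hqp k, hdc k]
  have hpj : p (σe.symm j) = j := σe.apply_symm_apply j
  rw [hexp, Finset.sum_apply, Finset.sum_eq_single (σe.symm j)]
  · rw [Pi.add_apply, Pi.smul_apply, Pi.smul_apply, hpj, Pi.single_eq_same,
      Pi.single_eq_same, Complex.real_smul, Complex.real_smul]
    linear_combination cc (σe.symm j) * Complex.re_add_im (v (σe.symm j))
  · intro b _ hb
    have hpb : p b ≠ j := fun h => hb (by rw [← hpj] at h; exact hpinj h)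
    rw [Pi.add_apply, Pi.smul_apply, Pi.smul_apply,
      Pi.single_eq_of_ne (Ne.symm hpb), Pi.single_eq_of_ne (Ne.symm hpb)]
    simp
  · simp
end
end

section
/- Let r ≥ 1. The map F : Δʳ → ℂʳ defined by F(z)_j = z_j/√(1 − |z_j|²) is a smooth diffeomorphism of Δʳ onto ℂʳ with inverse G(w)_j = w_j/√(1 + |w_j|²), and it satisfies F*ω₀ = ω₋ and F*ω₊ = ω₀; that is, for all z ∈ Δʳ and u, v ∈ ℂʳ: ω₀(DF(z)u, DF(z)v) = ω₋(z)(u,v) and ω₊(F(z))(DF(z)u, DF(z)v) = ω₀(u,v). -/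
open Complex Set

noncomputable section

/-- The Fubini-Study form `ω₊(z)(u,v) = Σⱼ Im (conj uⱼ * vⱼ) / (1 + |zⱼ|²)²` on `ℂʳ`. -/
def omegaPlus {r : ℕ} (z u v : Fin r → ℂ) : ℝ :=
  ∑ j, ((starRingEnd ℂ) (u j) * v j).im / (1 + ‖z j‖ ^ 2) ^ 2

/-- The duality map of the polydisc: `F(z)ⱼ = zⱼ / √(1 - |zⱼ|²)`. -/
def dualityMap {r : ℕ} (z : Fin r → ℂ) : Fin r → ℂ :=
  fun j => z j / (Real.sqrt (1 - ‖z j‖ ^ 2) : ℂ)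

/-- The inverse duality map of the polydisc: `G(w)ⱼ = wⱼ / √(1 + |wⱼ|²)`. -/
def dualityInv {r : ℕ} (w : Fin r → ℂ) : Fin r → ℂ :=
  fun j => w j / (Real.sqrt (1 + ‖w j‖ ^ 2) : ℂ)

/-! Auxiliary one-variable lemmas -/

/-- Derivative of the one-variable duality map `z ↦ z/√(1-|z|²)`. -/
def D1 (z : ℂ) : ℂ →L[ℝ] ℂ :=
  (((Real.sqrt (1 - ‖z‖ ^ 2))⁻¹ : ℝ) : ℂ) • ContinuousLinearMap.id ℝ ℂ
  + (z * ((((Real.sqrt (1 - ‖z‖ ^ 2))⁻¹ : ℝ) : ℂ))^3) •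
      (Complex.ofRealCLM.comp (innerSL ℝ z))

lemma D1_apply (z u : ℂ) :
    D1 z u = (((Real.sqrt (1 - ‖z‖ ^ 2))⁻¹ : ℝ) : ℂ) * u
      + z * ((((Real.sqrt (1 - ‖z‖ ^ 2))⁻¹ : ℝ) : ℂ))^3
          * ((((starRingEnd ℂ) z * u).re : ℝ) : ℂ) := by
  simp [D1, Complex.inner, mul_assoc]
  left; left; ring

lemma one_sub_sq_pos {z : ℂ} (hz : ‖z‖ < 1) : 0 < 1 - ‖z‖ ^ 2 := by
  have := norm_nonneg z; nlinarith

lemma hasFDerivAt_f1 {z : ℂ} (hz : ‖z‖ < 1) :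
    HasFDerivAt (fun z : ℂ => z / (Real.sqrt (1 - ‖z‖ ^ 2) : ℂ)) (D1 z) z := by
  have hs : 0 < 1 - ‖z‖ ^ 2 := one_sub_sq_pos hz
  set s : ℝ := 1 - ‖z‖ ^ 2 with hsdef
  have ht : 0 < Real.sqrt s := Real.sqrt_pos.2 hs
  have h1 : HasFDerivAt (fun z : ℂ => 1 - ‖z‖ ^ 2)
      (-(2 • (innerSL ℝ z))) z := by
    refine ((hasFDerivAt_const (1:ℝ) z).sub ((hasFDerivAt_id z).norm_sq)).congr_fderiv ?_
    simp
  have h2 : HasFDerivAt (fun z : ℂ => Real.sqrt (1 - ‖z‖ ^ 2))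
      ((1 / (2 * Real.sqrt s)) • (-(2 • (innerSL ℝ z)) : ℂ →L[ℝ] ℝ)) z :=
    (Real.hasDerivAt_sqrt hs.ne').comp_hasFDerivAt z h1
  have h3 : HasFDerivAt (fun z : ℂ => ((Real.sqrt (1 - ‖z‖ ^ 2) : ℝ) : ℂ))
      (Complex.ofRealCLM.comp ((1 / (2 * Real.sqrt s)) • (-(2 • (innerSL ℝ z)) : ℂ →L[ℝ] ℝ))) z :=
    Complex.ofRealCLM.hasFDerivAt.comp z h2
  have hne : ((Real.sqrt s : ℝ) : ℂ) ≠ 0 := by exact_mod_cast ht.ne'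
  have h4 : HasFDerivAt (fun z : ℂ => ((Real.sqrt (1 - ‖z‖ ^ 2) : ℝ) : ℂ)⁻¹)
      ((-(((Real.sqrt s : ℝ) : ℂ) ^ 2)⁻¹) •
        (Complex.ofRealCLM.comp ((1 / (2 * Real.sqrt s)) • (-(2 • (innerSL ℝ z)) : ℂ →L[ℝ] ℝ)))) z :=
    (hasDerivAt_inv hne).comp_hasFDerivAt z h3
  have h5 := (hasFDerivAt_id z).mul h4
  rw [show (fun z : ℂ => z / (Real.sqrt (1 - ‖z‖ ^ 2) : ℂ))
      = fun z : ℂ => z * ((Real.sqrt (1 - ‖z‖ ^ 2) : ℂ))⁻¹ from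
    funext fun _ => div_eq_mul_inv _ _]
  refine h5.congr_fderiv ?_
  ext u
  rw [D1_apply]
  simp only [ContinuousLinearMap.add_apply, ContinuousLinearMap.smul_apply,
    ContinuousLinearMap.coe_comp', Function.comp_apply, ContinuousLinearMap.id_apply,
    ContinuousLinearMap.neg_apply, innerSL_apply_apply, Complex.inner, Complex.ofRealCLM_apply,
    smul_eq_mul, Complex.real_smul, nsmul_eq_mul]
  push_cast
  rw [← hsdef]
  field_simp
  simp only [id]
  ring

lemma core_identity {z : ℂ} (hz : ‖z‖ < 1) (u v : ℂ) :
    ((starRingEnd ℂ) (D1 z u) * D1 z v).im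
      = ((starRingEnd ℂ) u * v).im / (1 - ‖z‖ ^ 2) ^ 2 := by
  have hs : 0 < 1 - ‖z‖ ^ 2 := one_sub_sq_pos hz
  set t : ℝ := Real.sqrt (1 - ‖z‖ ^ 2) with htdef
  have ht : 0 < t := Real.sqrt_pos.2 hs
  have hts : t ^ 2 = 1 - ‖z‖ ^ 2 := Real.sq_sqrt hs.le
  rw [D1_apply, D1_apply, ← htdef, ← hts]
  have hzsq : ‖z‖ ^ 2 = z.re ^ 2 + z.im ^ 2 := by
    rw [Complex.sq_norm, Complex.normSq_apply]; ring
  have hrel : t ^ 2 = 1 - (z.re ^ 2 + z.im ^ 2) := by rw [hts, hzsq]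
  rw [show ((t⁻¹ : ℝ) : ℂ)^3 = (((t⁻¹)^3 : ℝ) : ℂ) by push_cast; ring]
  simp only [Complex.add_im, Complex.mul_im, Complex.mul_re, Complex.add_re,
    Complex.ofReal_re, Complex.ofReal_im, Complex.conj_re, Complex.conj_im]
  have ht0 : t ≠ 0 := ht.ne'
  field_simp
  linear_combination (u.re * v.im - u.im * v.re) * t ^ 2 * hrel

lemma one_add_abs_f1_sq {z : ℂ} (hz : ‖z‖ < 1) :
    1 + ‖z / (Real.sqrt (1 - ‖z‖ ^ 2) : ℂ)‖ ^ 2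
      = (1 - ‖z‖ ^ 2)⁻¹ := by
  have hs : 0 < 1 - ‖z‖ ^ 2 := one_sub_sq_pos hz
  have ht : 0 < Real.sqrt (1 - ‖z‖ ^ 2) := Real.sqrt_pos.2 hs
  rw [norm_div, Complex.norm_real, Real.norm_eq_abs, abs_of_pos ht, div_pow, Real.sq_sqrt hs.le]
  field_simp
  ring

lemma f1_contDiffAt {z : ℂ} (hz : ‖z‖ < 1) :
    ContDiffAt ℝ (⊤ : ℕ∞) (fun z : ℂ => z / (Real.sqrt (1 - ‖z‖ ^ 2) : ℂ)) z := by
  have hs : 0 < 1 - ‖z‖ ^ 2 := one_sub_sq_pos hz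
  have habs : ContDiff ℝ (⊤ : ℕ∞) (fun z : ℂ => ‖z‖ ^ 2) := by
    simpa using (contDiff_norm_sq ℝ (E := ℂ) (n := (⊤ : ℕ∞)))
  have h1 : ContDiffAt ℝ (⊤ : ℕ∞) (fun z : ℂ => 1 - ‖z‖ ^ 2) z :=
    (contDiff_const.sub habs).contDiffAt
  have h2 : ContDiffAt ℝ (⊤ : ℕ∞) (fun z : ℂ => Real.sqrt (1 - ‖z‖ ^ 2)) z :=
    (Real.contDiffAt_sqrt hs.ne').comp z h1
  have h3 : ContDiffAt ℝ (⊤ : ℕ∞) (fun z : ℂ => ((Real.sqrt (1 - ‖z‖ ^ 2) : ℝ) : ℂ)) z :=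
    Complex.ofRealCLM.contDiff.contDiffAt.comp z h2
  have hne : ((Real.sqrt (1 - ‖z‖ ^ 2) : ℝ) : ℂ) ≠ 0 := by
    exact_mod_cast (Real.sqrt_pos.2 hs).ne'
  simp only [div_eq_mul_inv]
  exact (contDiffAt_id (𝕜 := ℝ) (E := ℂ)).mul (h3.inv hne)

lemma g1_contDiff :
    ContDiff ℝ (⊤ : ℕ∞) (fun w : ℂ => w / (Real.sqrt (1 + ‖w‖ ^ 2) : ℂ)) := by
  have habs : ContDiff ℝ (⊤ : ℕ∞) (fun w : ℂ => ‖w‖ ^ 2) := by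
    simpa using (contDiff_norm_sq ℝ (E := ℂ) (n := (⊤ : ℕ∞)))
  rw [contDiff_iff_contDiffAt]
  intro w
  have hs : 0 < 1 + ‖w‖ ^ 2 := by positivity
  have h1 : ContDiffAt ℝ (⊤ : ℕ∞) (fun w : ℂ => 1 + ‖w‖ ^ 2) w :=
    (contDiff_const.add habs).contDiffAt
  have h2 : ContDiffAt ℝ (⊤ : ℕ∞) (fun w : ℂ => Real.sqrt (1 + ‖w‖ ^ 2)) w :=
    (Real.contDiffAt_sqrt hs.ne').comp w h1
  have h3 : ContDiffAt ℝ (⊤ : ℕ∞) (fun w : ℂ => ((Real.sqrt (1 + ‖w‖ ^ 2) : ℝ) : ℂ)) w :=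
    Complex.ofRealCLM.contDiff.contDiffAt.comp w h2
  have hne : ((Real.sqrt (1 + ‖w‖ ^ 2) : ℝ) : ℂ) ≠ 0 := by
    exact_mod_cast (Real.sqrt_pos.2 hs).ne'
  simp only [div_eq_mul_inv]
  exact (contDiffAt_id (𝕜 := ℝ) (E := ℂ)).mul (h3.inv hne)

lemma abs_g1_lt_one (w : ℂ) :
    ‖w / (Real.sqrt (1 + ‖w‖ ^ 2) : ℂ)‖ < 1 := by
  have hs : 0 < 1 + ‖w‖ ^ 2 := by positivity
  have ht : 0 < Real.sqrt (1 + ‖w‖ ^ 2) := Real.sqrt_pos.2 hs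
  rw [norm_div, Complex.norm_real, Real.norm_eq_abs, abs_of_pos ht, div_lt_one ht]
  nlinarith [Real.sq_sqrt hs.le, norm_nonneg w, ht]

lemma g1_f1 {z : ℂ} (hz : ‖z‖ < 1) :
    (z / (Real.sqrt (1 - ‖z‖ ^ 2) : ℂ)) /
      (Real.sqrt (1 + ‖z / (Real.sqrt (1 - ‖z‖ ^ 2) : ℂ)‖ ^ 2) : ℂ) = z := by
  have hs : 0 < 1 - ‖z‖ ^ 2 := one_sub_sq_pos hz
  have ht : 0 < Real.sqrt (1 - ‖z‖ ^ 2) := Real.sqrt_pos.2 hs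
  have hne : ((Real.sqrt (1 - ‖z‖ ^ 2) : ℝ) : ℂ) ≠ 0 := by exact_mod_cast ht.ne'
  rw [one_add_abs_f1_sq hz, Real.sqrt_inv, Complex.ofReal_inv]
  field_simp

lemma f1_g1 (w : ℂ) :
    (w / (Real.sqrt (1 + ‖w‖ ^ 2) : ℂ)) /
      (Real.sqrt (1 - ‖w / (Real.sqrt (1 + ‖w‖ ^ 2) : ℂ)‖ ^ 2) : ℂ) = w := by
  have hs : 0 < 1 + ‖w‖ ^ 2 := by positivity
  have ht : 0 < Real.sqrt (1 + ‖w‖ ^ 2) := Real.sqrt_pos.2 hs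
  have hne : ((Real.sqrt (1 + ‖w‖ ^ 2) : ℝ) : ℂ) ≠ 0 := by exact_mod_cast ht.ne'
  have h1 : 1 - ‖w / (Real.sqrt (1 + ‖w‖ ^ 2) : ℂ)‖ ^ 2
      = (1 + ‖w‖ ^ 2)⁻¹ := by
    rw [norm_div, Complex.norm_real, Real.norm_eq_abs, abs_of_pos ht, div_pow, Real.sq_sqrt hs.le]
    field_simp
    ring
  rw [h1, Real.sqrt_inv, Complex.ofReal_inv]
  field_simp

lemma hasFDerivAt_dualityMap {r : ℕ} {z : Fin r → ℂ} (hz : z ∈ polydisc r) :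
    HasFDerivAt (dualityMap (r := r))
      (ContinuousLinearMap.pi fun j => (D1 (z j)).comp (ContinuousLinearMap.proj j)) z := by
  rw [hasFDerivAt_pi']
  intro j
  have h := (hasFDerivAt_f1 (hz j)).comp z
    (ContinuousLinearMap.proj (R := ℝ) (φ := fun _ : Fin r => ℂ) j).hasFDerivAt
  convert h using 1
  · rfl
  · ext u
    simp

lemma fderiv_dualityMap_apply {r : ℕ} {z : Fin r → ℂ} (hz : z ∈ polydisc r) (u : Fin r → ℂ)
    (j : Fin r) : fderiv ℝ (dualityMap (r := r)) z u j = D1 (z j) (u j) := by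
  rw [(hasFDerivAt_dualityMap hz).fderiv]
  simp

/-- The duality map of the polydisc is a smooth diffeomorphism onto `ℂʳ` with inverse
`G(w)ⱼ = wⱼ/√(1+|wⱼ|²)`, satisfying the symplectic duality `F*ω₀ = ω₋`, `F*ω₊ = ω₀`. -/

theorem polydisc_symplectic_duality (r : ℕ) (hr : 1 ≤ r) :
    ContDiffOn ℝ (⊤ : ℕ∞) (dualityMap (r := r)) (polydisc r) ∧
    ContDiff ℝ (⊤ : ℕ∞) (dualityInv (r := r)) ∧
    (∀ w : Fin r → ℂ, dualityInv w ∈ polydisc r) ∧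
    (∀ z ∈ polydisc r, dualityInv (dualityMap z) = z) ∧
    (∀ w : Fin r → ℂ, dualityMap (dualityInv w) = w) ∧
    (∀ z ∈ polydisc r, ∀ u v : Fin r → ℂ,
      omega0 (fderiv ℝ dualityMap z u) (fderiv ℝ dualityMap z v) = omegaMinus z u v) ∧
    (∀ z ∈ polydisc r, ∀ u v : Fin r → ℂ,
      omegaPlus (dualityMap z) (fderiv ℝ dualityMap z u) (fderiv ℝ dualityMap z v)
        = omega0 u v) := by
  refine ⟨?_, ?_, ?_, ?_, ?_, ?_, ?_⟩
  · -- ContDiffOn of dualityMap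
    intro z hz
    apply ContDiffAt.contDiffWithinAt
    rw [contDiffAt_pi]
    intro j
    exact (f1_contDiffAt (hz j)).comp z
      ((ContinuousLinearMap.proj (R := ℝ) (φ := fun _ : Fin r => ℂ) j).contDiff.contDiffAt)
  · -- ContDiff of dualityInv
    rw [contDiff_pi]
    intro j
    exact g1_contDiff.comp
      ((ContinuousLinearMap.proj (R := ℝ) (φ := fun _ : Fin r => ℂ) j).contDiff)
  · exact fun w j => abs_g1_lt_one (w j)
  · exact fun z hz => funext fun j => g1_f1 (hz j)
  · exact fun w => funext fun j => f1_g1 (w j)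
  · intro z hz u v
    unfold omega0 omegaMinus
    refine Finset.sum_congr rfl fun j _ => ?_
    rw [fderiv_dualityMap_apply hz, fderiv_dualityMap_apply hz]
    exact core_identity (hz j) (u j) (v j)
  · intro z hz u v
    unfold omegaPlus omega0
    refine Finset.sum_congr rfl fun j _ => ?_
    rw [fderiv_dualityMap_apply hz, fderiv_dualityMap_apply hz]
    have hs : 0 < 1 - ‖z j‖ ^ 2 := one_sub_sq_pos (hz j)
    rw [show dualityMap z j = z j / (Real.sqrt (1 - ‖z j‖ ^ 2) : ℂ) from rfl,
      one_add_abs_f1_sq (hz j), core_identity (hz j) (u j) (v j)]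
    field_simp
end
end
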